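/- Let (U, 𝒮) be a laminar set system. Then there exists a partition of the set of all non-singleton members of 𝒮 (the inner nodes of the laminar tree) into four sets, each of which is thin. -/

import Mathlib

variable {α : Type*} [DecidableEq α] [Fintype α]

/-- A set system on the finite universe `α`: `∅ ∉ 𝒮`, `univ ∈ 𝒮`, all singletons in `𝒮`. -/
def IsSetSystem (𝒮 : Finset (Finset α)) : Prop :=
  (∅ : Finset α) ∉ 𝒮 ∧ Finset.univ ∈ 𝒮 ∧ ∀ a : α, ({a} : Finset α) ∈ 𝒮

/-- Two sets overlap: non-disjoint and neither contains the other. -/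
def Overlap (X Y : Finset α) : Prop :=
  (X ∩ Y).Nonempty ∧ ¬ X ⊆ Y ∧ ¬ Y ⊆ X

/-- A set system is laminar when no two members overlap. -/
def IsLaminar (𝒮 : Finset (Finset α)) : Prop :=
  ∀ X ∈ 𝒮, ∀ Y ∈ 𝒮, ¬ Overlap X Y

/-- `c` is a child of `x` in the laminar tree: a ⊆-maximal proper subset of `x` in `𝒮`. -/
def IsChild (𝒮 : Finset (Finset α)) (c x : Finset α) : Prop :=
  c ∈ 𝒮 ∧ c ⊂ x ∧ ∀ y ∈ 𝒮, y ⊂ x → c ⊆ y → y = c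

/-- `p` is the parent of `x`: the ⊆-minimal member of `𝒮` properly containing `x`. -/
def IsParent (𝒮 : Finset (Finset α)) (p x : Finset α) : Prop :=
  p ∈ 𝒮 ∧ x ⊂ p ∧ ∀ y ∈ 𝒮, x ⊂ y → p ⊆ y

/-- `(π, σ)` identifies `S`: a pair of injections on `S` such that each `s ∈ S` is the
⊆-minimal member of `𝒮` containing both `π s` and `σ s`. -/
def Identifies (𝒮 S : Finset (Finset α)) (π σ : Finset α → α) : Prop :=
  Set.InjOn π ↑S ∧ Set.InjOn σ ↑S ∧
  ∀ s ∈ S, π s ∈ s ∧ σ s ∈ s ∧ ∀ y ∈ 𝒮, π s ∈ y → σ s ∈ y → s ⊆ y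

/-- `x` is `s`-requested in `(π, σ)` (for `s ∈ S`): `x ⊆ s` and `π s ∈ x` or `σ s ∈ x`. -/
def Requested (S : Finset (Finset α)) (π σ : Finset α → α) (s x : Finset α) : Prop :=
  s ∈ S ∧ x ⊆ s ∧ (π s ∈ x ∨ σ s ∈ x)

/-- `(π, σ)` has unique request: every member of `𝒮` is `s`-requested for at most one `s ∈ S`. -/
def UniqueRequest (𝒮 S : Finset (Finset α)) (π σ : Finset α → α) : Prop :=
  ∀ x ∈ 𝒮, ∀ s s' : Finset α,
    Requested S π σ s x → Requested S π σ s' x → s = s'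

/-- The bi-colouring `(A, B)` (disjoint, equal cardinality) identifies `S`. -/
def BicolIdentifies (𝒮 S : Finset (Finset α)) (A B : Finset α) : Prop :=
  Disjoint A B ∧ A.card = B.card ∧
  ∃ π σ : Finset α → α, Identifies 𝒮 S π σ ∧ UniqueRequest 𝒮 S π σ ∧
    S.image π = A ∧ S.image σ = B

/-- `X` is a thin set of inner nodes: for every non-root `x ∈ X`, the parent of `x` is not
in `X` and `x` has a sibling not in `X`. -/
def Thin (𝒮 X : Finset (Finset α)) : Prop :=
  ∀ x ∈ X, x ≠ Finset.univ →
    (∀ p : Finset α, IsParent 𝒮 p x → p ∉ X) ∧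
    ∃ y p : Finset α, y ≠ x ∧ IsChild 𝒮 x p ∧ IsChild 𝒮 y p ∧ y ∉ X

set_option linter.unusedSectionVars false
set_option linter.unusedVariables false
section Aux

variable (𝒮 : Finset (Finset α))

/-- An injective rank function on finsets. -/
noncomputable def ordF : Finset α → ℕ := fun s => ((Fintype.equivFin (Finset α)) s : ℕ)

lemma ordF_inj : Function.Injective (ordF (α := α)) := fun a b h =>
  (Fintype.equivFin (Finset α)).injective (Fin.val_injective h)

/-- Depth of a node: number of strict supersets in `𝒮`. -/
noncomputable def depthF (x : Finset α) : ℕ :=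
  (𝒮.filter (fun y => x ⊂ y)).card

open Classical in
/-- The canonical parent. -/
noncomputable def parF (x : Finset α) : Finset α :=
  if h : ∃ p, IsParent 𝒮 p x then h.choose else ∅

open Classical in
/-- The bit: 1 iff `x` is the `ordF`-smallest child of its canonical parent. -/
noncomputable def bitF (x : Finset α) : ℕ :=
  if (∀ c, IsChild 𝒮 c (parF 𝒮 x) → ordF x ≤ ordF c) then 1 else 0

variable {𝒮} (hsys : IsSetSystem 𝒮) (hlam : IsLaminar 𝒮)

include hlam in
lemma lam_chain {x y : Finset α} (hx : x ∈ 𝒮) (hy : y ∈ 𝒮)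
    (hne : (x ∩ y).Nonempty) : x ⊆ y ∨ y ⊆ x := by
  have := hlam x hx y hy
  unfold Overlap at this
  push_neg at this
  by_cases hxy : x ⊆ y
  · exact Or.inl hxy
  · exact Or.inr (this hne hxy)

include hsys in
lemma mem_nonempty {x : Finset α} (hx : x ∈ 𝒮) : x.Nonempty := by
  rw [Finset.nonempty_iff_ne_empty]
  rintro rfl; exact hsys.1 hx

include hsys hlam in
lemma parent_exists {x : Finset α} (hx : x ∈ 𝒮) (hxu : x ≠ Finset.univ) :
    ∃ p, IsParent 𝒮 p x := by
  classical
  set T := 𝒮.filter (fun y => x ⊂ y) with hT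
  have hTne : T.Nonempty := ⟨Finset.univ, by
    simp only [hT, Finset.mem_filter]
    exact ⟨hsys.2.1, lt_of_le_of_ne (Finset.subset_univ x) hxu⟩⟩
  obtain ⟨m, hm, hmin⟩ : ∃ m ∈ T, ∀ y ∈ T, ¬ y ⊂ m := by
    obtain ⟨m, hm⟩ := Finset.exists_minimal hTne
    exact ⟨m, hm.1, fun y hy hlt => hlt.2 (hm.2 hy hlt.1)⟩
  simp only [hT, Finset.mem_filter] at hm
  refine ⟨m, hm.1, hm.2, fun y hy hxy => ?_⟩
  have hyT : y ∈ T := by simp [hT, Finset.mem_filter, hy, hxy]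
  have hne : (m ∩ y).Nonempty := by
    obtain ⟨a, ha⟩ := mem_nonempty hsys hx
    exact ⟨a, Finset.mem_inter.2 ⟨hm.2.1 ha, hxy.1 ha⟩⟩
  rcases lam_chain hlam hm.1 hy hne with h | h
  · exact h
  · rcases ssubset_or_eq_of_subset h with h | rfl
    · exact absurd h (hmin y hyT)
    · exact subset_rfl

lemma parent_unique {p q x : Finset α} (hp : IsParent 𝒮 p x) (hq : IsParent 𝒮 q x) :
    p = q :=
  le_antisymm (hp.2.2 q hq.1 hq.2.1) (hq.2.2 p hp.1 hp.2.1)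

lemma child_of_parent {p x : Finset α} (hx : x ∈ 𝒮) (hp : IsParent 𝒮 p x) :
    IsChild 𝒮 x p := by
  refine ⟨hx, hp.2.1, fun y hy hyp hxy => ?_⟩
  by_contra hne
  have : x ⊂ y := lt_of_le_of_ne hxy (fun h => hne h.symm)
  exact absurd (hp.2.2 y hy this) (not_le_of_gt hyp)

include hsys hlam in
lemma parent_of_child {p c : Finset α} (hp : p ∈ 𝒮) (hc : IsChild 𝒮 c p) :
    IsParent 𝒮 p c := by
  refine ⟨hp, hc.2.1, fun y hy hcy => ?_⟩
  have hne : (p ∩ y).Nonempty := by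
    obtain ⟨a, ha⟩ := mem_nonempty hsys hc.1
    exact ⟨a, Finset.mem_inter.2 ⟨hc.2.1.1 ha, hcy.1 ha⟩⟩
  rcases lam_chain hlam hp hy hne with h | h
  · exact h
  · rcases ssubset_or_eq_of_subset h with h | rfl
    · exact absurd (hc.2.2 y hy h hcy.1) (ne_of_gt hcy)
    · exact subset_rfl

include hsys hlam in
lemma parF_spec {x : Finset α} (hx : x ∈ 𝒮) (hxu : x ≠ Finset.univ) :
    IsParent 𝒮 (parF 𝒮 x) x := by
  have h := parent_exists hsys hlam hx hxu
  rw [parF, dif_pos h]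
  exact h.choose_spec

lemma depth_parent {p x : Finset α} (hx : x ∈ 𝒮) (hp : IsParent 𝒮 p x) :
    depthF 𝒮 x = depthF 𝒮 p + 1 := by
  classical
  have hset : 𝒮.filter (fun y => x ⊂ y) = insert p (𝒮.filter (fun y => p ⊂ y)) := by
    ext y
    simp only [Finset.mem_filter, Finset.mem_insert]
    constructor
    · rintro ⟨hy, hxy⟩
      have hpy := hp.2.2 y hy hxy
      rcases ssubset_or_eq_of_subset hpy with h | h
      · exact Or.inr ⟨hy, h⟩
      · exact Or.inl h.symm
    · rintro (rfl | ⟨hy, hpy⟩)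
      · exact ⟨hp.1, hp.2.1⟩
      · exact ⟨hy, hp.2.1.trans hpy⟩
  have hpn : p ∉ 𝒮.filter (fun y => p ⊂ y) := by
    simp only [Finset.mem_filter]
    rintro ⟨-, h⟩; exact lt_irrefl _ h
  rw [depthF, hset, Finset.card_insert_of_notMem hpn, depthF]

include hsys hlam in
lemma sibling_exists {p x : Finset α} (hx : x ∈ 𝒮) (hp : IsParent 𝒮 p x) :
    ∃ y, y ≠ x ∧ IsChild 𝒮 y p := by
  classical
  obtain ⟨a, hap, hax⟩ := Finset.exists_of_ssubset hp.2.1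
  set T := 𝒮.filter (fun z => a ∈ z ∧ z ⊂ p) with hT
  have hsing : ({a} : Finset α) ∈ T := by
    simp only [hT, Finset.mem_filter]
    refine ⟨hsys.2.2 a, Finset.mem_singleton_self a, lt_of_le_of_ne (Finset.singleton_subset_iff.2 hap) ?_⟩
    rintro rfl
    obtain ⟨b, hb⟩ := mem_nonempty hsys hx
    have := hp.2.1.1 hb
    rw [Finset.mem_singleton] at this
    subst this
    exact hax hb
  obtain ⟨m, hm, hmax⟩ : ∃ m ∈ T, ∀ y ∈ T, ¬ m ⊂ y := by
    obtain ⟨m, hm⟩ := Finset.exists_maximal ⟨_, hsing⟩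
    exact ⟨m, hm.1, fun y hy hlt => hlt.2 (hm.2 hy hlt.1)⟩
  simp only [hT, Finset.mem_filter] at hm
  refine ⟨m, ?_, hm.1, hm.2.2, fun y hy hyp hmy => ?_⟩
  · rintro rfl; exact hax hm.2.1
  · by_contra hne
    have hmy' : m ⊂ y := lt_of_le_of_ne hmy (fun h => hne h.symm)
    have : y ∈ T := by
      simp only [hT, Finset.mem_filter]
      exact ⟨hy, hmy'.1 hm.2.1, hyp⟩
    exact hmax y this hmy'

include hsys hlam in
lemma bitF_eq_one {x : Finset α} (hx : x ∈ 𝒮) (hxu : x ≠ Finset.univ)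
    (h : ∀ c, IsChild 𝒮 c (parF 𝒮 x) → ordF x ≤ ordF c) : bitF 𝒮 x = 1 := by
  rw [bitF, if_pos h]

lemma bitF_le_one (x : Finset α) : bitF 𝒮 x ≤ 1 := by
  rw [bitF]; split <;> omega

lemma bitF_cond {x : Finset α} (h : bitF 𝒮 x = 1) :
    ∀ c, IsChild 𝒮 c (parF 𝒮 x) → ordF x ≤ ordF c := by
  by_contra hc
  rw [bitF, if_neg hc] at h
  exact absurd h (by omega)

end Aux
/-- The inner nodes of the laminar tree can be partitioned into four thin sets. -/
theorem stmt_13 (𝒮 : Finset (Finset α)) (hsys : IsSetSystem 𝒮) (hlam : IsLaminar 𝒮) :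
    ∃ X : Fin 4 → Finset (Finset α),
      (∀ i : Fin 4, ∀ x ∈ X i, x ∈ 𝒮 ∧ ∀ a : α, x ≠ {a}) ∧
      (∀ i j : Fin 4, i ≠ j → Disjoint (X i) (X j)) ∧
      (∀ x ∈ 𝒮, (∀ a : α, x ≠ {a}) → ∃ i : Fin 4, x ∈ X i) ∧
      (∀ i : Fin 4, Thin 𝒮 (X i)) := by
  classical
  refine ⟨fun i => 𝒮.filter (fun x => (∀ a : α, x ≠ {a}) ∧
      depthF 𝒮 x % 2 = i.val % 2 ∧ bitF 𝒮 x = i.val / 2), ?_, ?_, ?_, ?_⟩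
  · intro i x hx
    simp only [Finset.mem_filter] at hx
    exact ⟨hx.1, hx.2.1⟩
  · intro i j hij
    rw [Finset.disjoint_left]
    intro x hx hx'
    simp only [Finset.mem_filter] at hx hx'
    apply hij
    have h1 := hx.2.2.1; have h2 := hx'.2.2.1
    have h3 := hx.2.2.2; have h4 := hx'.2.2.2
    have hi := i.isLt; have hj := j.isLt
    exact Fin.ext (by omega)
  · intro x hx hns
    have hble := bitF_le_one (𝒮 := 𝒮) x
    refine ⟨⟨depthF 𝒮 x % 2 + 2 * bitF 𝒮 x, by omega⟩, ?_⟩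
    simp only [Finset.mem_filter]
    exact ⟨hx, hns, by omega, by omega⟩
  · intro i x hxX hxu
    simp only [Finset.mem_filter] at hxX
    obtain ⟨hx, hns, hdep, hbit⟩ := hxX
    have hP := parF_spec hsys hlam hx hxu
    constructor
    · intro p hp hpX
      simp only [Finset.mem_filter] at hpX
      have hd : depthF 𝒮 x = depthF 𝒮 p + 1 := depth_parent hx hp
      have := hpX.2.2.1
      omega
    · have hxc : IsChild 𝒮 x (parF 𝒮 x) := child_of_parent hx hP
      have hble := bitF_le_one (𝒮 := 𝒮) x
      by_cases hb : bitF 𝒮 x = 1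
      · -- x is the minimum child; any other sibling works
        obtain ⟨y, hyne, hyc⟩ := sibling_exists hsys hlam hx hP
        refine ⟨y, parF 𝒮 x, hyne, hxc, hyc, ?_⟩
        intro hyX
        simp only [Finset.mem_filter] at hyX
        obtain ⟨hy, hyns, hydep, hybit⟩ := hyX
        have hby : bitF 𝒮 y = 1 := by omega
        have hyu : y ≠ Finset.univ := by
          rintro rfl
          exact absurd (ssubset_of_ssubset_of_subset hyc.2.1 (Finset.subset_univ _))
            (ssubset_irrefl _)
        have hPy : IsParent 𝒮 (parF 𝒮 x) y := parent_of_child hsys hlam hP.1 hyc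
        have hpar : parF 𝒮 y = parF 𝒮 x :=
          parent_unique (parF_spec hsys hlam hy hyu) hPy
        have hcy := bitF_cond (𝒮 := 𝒮) hby
        rw [hpar] at hcy
        have hcx := bitF_cond (𝒮 := 𝒮) hb
        exact hyne (ordF_inj (le_antisymm (hcy x hxc) (hcx y hyc)))
      · -- x is not the minimum child; the minimum child works
        have hb0 : bitF 𝒮 x = 0 := by omega
        have hxC : x ∈ 𝒮.filter (fun c => IsChild 𝒮 c (parF 𝒮 x)) := by
          simp only [Finset.mem_filter]; exact ⟨hx, hxc⟩
        obtain ⟨m, hmC, hmin⟩ :=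
          Finset.exists_min_image (𝒮.filter (fun c => IsChild 𝒮 c (parF 𝒮 x)))
            ordF ⟨x, hxC⟩
        simp only [Finset.mem_filter] at hmC
        have hmin' : ∀ c, IsChild 𝒮 c (parF 𝒮 x) → ordF m ≤ ordF c := by
          intro c hc
          exact hmin c (by simp only [Finset.mem_filter]; exact ⟨hc.1, hc⟩)
        have hmne : m ≠ x := by
          rintro rfl
          exact hb (bitF_eq_one hsys hlam hx hxu hmin')
        refine ⟨m, parF 𝒮 x, hmne, hxc, hmC.2, ?_⟩
        intro hmX
        simp only [Finset.mem_filter] at hmX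
        have hmu : m ≠ Finset.univ := by
          rintro rfl
          exact absurd (ssubset_of_ssubset_of_subset hmC.2.2.1 (Finset.subset_univ _))
            (ssubset_irrefl _)
        have hPm : IsParent 𝒮 (parF 𝒮 x) m := parent_of_child hsys hlam hP.1 hmC.2
        have hparm : parF 𝒮 m = parF 𝒮 x :=
          parent_unique (parF_spec hsys hlam hmC.1 hmu) hPm
        have hbm : bitF 𝒮 m = 1 :=
          bitF_eq_one hsys hlam hmC.1 hmu (by rw [hparm]; exact hmin')
        have := hmX.2.2.2
        omega
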